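/- Let Y, Y₁, Y₂, … be i.i.d. real random variables and define Xₙ = Σ_{i=1}^{n} Yᵢ for n ∈ ℕ. Let 𝒮 ⊆ ℝ and let φ : 𝒮 → ℝ be a function such that E[exp(s Y)] ≤ exp(φ(s)) for all s ∈ 𝒮. Then for every θ ∈ ℝ, every m ∈ ℕ, and every s ∈ 𝒮: Pr{ ∃ n ∈ ℕ, s(Xₙ − m θ) − φ(s)(n − m) ≥ 0 } ≤ [exp(φ(s) − θ s)]^m. -/

import Mathlib

open MeasureTheory ProbabilityTheory

/-- Uniform exponential inequality for sums of i.i.d. random variables whose common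
moment generating function is bounded by `exp (φ s)`: for every `θ`, `m ≥ 1` and `s ∈ S`,
`Pr{∃ n ≥ 1, s (Xₙ - m θ) - φ(s) (n - m) ≥ 0} ≤ (exp (φ(s) - θ s))^m`, where
`Xₙ = Y₁ + ⋯ + Yₙ`. -/
theorem statement8 {Ω : Type*} [MeasurableSpace Ω] (μ : Measure Ω) [IsProbabilityMeasure μ]
    (Y₀ : Ω → ℝ) (Y : ℕ → Ω → ℝ) (hY₀m : Measurable Y₀) (hYm : ∀ i, Measurable (Y i))
    (hindep : iIndepFun Y μ)
    (hid : ∀ i, IdentDistrib (Y i) Y₀ μ μ)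
    (S : Set ℝ) (φ : ℝ → ℝ)
    (hint : ∀ s ∈ S, Integrable (fun ω => Real.exp (s * Y₀ ω)) μ)
    (hφ : ∀ s ∈ S, (∫ ω, Real.exp (s * Y₀ ω) ∂μ) ≤ Real.exp (φ s))
    (θ : ℝ) (m : ℕ) (hm : 1 ≤ m) (s : ℝ) (hs : s ∈ S) :
    μ {ω | ∃ n : ℕ, 1 ≤ n ∧
        0 ≤ s * ((∑ i ∈ Finset.range n, Y i ω) - m * θ) - φ s * ((n : ℝ) - m)}
      ≤ ENNReal.ofReal (Real.exp (φ s - θ * s) ^ m) := by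
  classical
  set g : ℕ → Ω → ℝ := fun n ω => Real.exp (s * (∑ i ∈ Finset.range (n+1), Y i ω) - (n+1) * φ s) with hg_def
  have hYsm : ∀ i, StronglyMeasurable (Y i) := fun i => (hYm i).stronglyMeasurable
  set ℱ := Filtration.natural Y hYsm with hℱ_def
  -- integrability of exp(s * Y i)
  have hid_exp : ∀ i, IdentDistrib (fun ω => Real.exp (s * Y i ω)) (fun ω => Real.exp (s * Y₀ ω)) μ μ := by
    intro i
    exact (hid i).comp (Real.measurable_exp.comp (measurable_const_mul s))
  have hint_i : ∀ i, Integrable (fun ω => Real.exp (s * Y i ω)) μ := fun i =>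
    ((hid_exp i).integrable_iff).mpr (hint s hs)
  -- integrability of g n
  have hint_g : ∀ n, Integrable (g n) μ := by
    intro n
    have h1 : Integrable (fun ω => Real.exp (s * (∑ i ∈ Finset.range (n+1), Y i) ω)) μ :=
      hindep.integrable_exp_mul_sum hYm (fun i _ => hint_i i)
    simp only [Finset.sum_apply] at h1
    have : g n = fun ω => Real.exp (-((n+1) * φ s)) * Real.exp (s * ∑ i ∈ Finset.range (n+1), Y i ω) := by
      funext ω; rw [hg_def]; rw [← Real.exp_add]; ring_nf
    rw [this]
    exact h1.const_mul _
  -- adaptedness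
  have hadp : StronglyAdapted ℱ g := by
    intro n
    have hsum : StronglyMeasurable[ℱ n] (fun ω => ∑ i ∈ Finset.range (n+1), Y i ω) := by
      apply Finset.stronglyMeasurable_fun_sum
      intro i hi
      have hi' : i ≤ n := Nat.lt_succ_iff.mp (Finset.mem_range.mp hi)
      exact (Filtration.stronglyAdapted_natural hYsm i).mono (ℱ.mono hi')
    exact Real.continuous_exp.comp_stronglyMeasurable ((hsum.const_mul s).sub stronglyMeasurable_const)
  -- the supermartingale property
  have hsuper : Supermartingale g ℱ μ := by
    refine supermartingale_nat hadp hint_g ?_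
    intro n
    set h : Ω → ℝ := fun ω => Real.exp (s * Y (n+1) ω - φ s) with hh_def
    have hkey : g (n+1) = g n * h := by
      funext ω
      simp only [hg_def, hh_def, Pi.mul_apply, Finset.sum_range_succ, ← Real.exp_add]
      push_cast
      ring_nf
    have hint_h : Integrable h μ := by
      have : h = fun ω => Real.exp (-φ s) * Real.exp (s * Y (n+1) ω) := by
        funext ω; rw [hh_def, ← Real.exp_add]; ring_nf
      rw [this]; exact (hint_i (n+1)).const_mul _
    -- independence of comap (Y (n+1)) from ℱ n
    have hindep' : Indep (MeasurableSpace.comap (Y (n+1)) inferInstance) (ℱ n) μ := by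
      have hdis : Disjoint ({n+1} : Set ℕ) {i | i ≤ n} := by
        simp only [Set.disjoint_left, Set.mem_singleton_iff, Set.mem_setOf_eq]
        rintro i rfl; omega
      have h1 := indep_iSup_of_disjoint (fun i => (hYm i).comap_le) hindep.iIndep hdis
      refine indep_of_indep_of_le_right (indep_of_indep_of_le_left h1 ?_) ?_
      · exact le_iSup₂ (f := fun i (_ : i ∈ ({n+1} : Set ℕ)) =>
          MeasurableSpace.comap (Y i) inferInstance) (n+1) rfl
      · exact le_rfl
    -- h is strongly measurable wrt comap (Y (n+1))
    have hYc : Measurable[MeasurableSpace.comap (Y (n+1)) inferInstance] (Y (n+1)) :=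
      Measurable.of_comap_le le_rfl
    have hhsm : StronglyMeasurable[MeasurableSpace.comap (Y (n+1)) inferInstance] h := by
      exact (Real.measurable_exp.comp ((hYc.const_mul s).sub measurable_const)).stronglyMeasurable
    have hcond : μ[h | ℱ n] =ᵐ[μ] fun _ => μ[h] :=
      condExp_indep_eq ((hYm (n+1)).comap_le) (ℱ.le n) hhsm hindep'
    -- ∫ h ≤ 1
    have hEh : μ[h] ≤ 1 := by
      have h2 : μ[h] = Real.exp (-φ s) * ∫ ω, Real.exp (s * Y (n+1) ω) ∂μ := by
        rw [show h = fun ω => Real.exp (-φ s) * Real.exp (s * Y (n+1) ω) from by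
          funext ω; rw [hh_def, ← Real.exp_add]; ring_nf]
        exact integral_const_mul _ _
      rw [h2, (hid_exp (n+1)).integral_eq]
      calc Real.exp (-φ s) * ∫ ω, Real.exp (s * Y₀ ω) ∂μ
          ≤ Real.exp (-φ s) * Real.exp (φ s) := by
            exact mul_le_mul_of_nonneg_left (hφ s hs) (Real.exp_nonneg _)
        _ = 1 := by rw [← Real.exp_add]; simp
    have hmul : μ[g (n+1) | ℱ n] =ᵐ[μ] g n * μ[h | ℱ n] := by
      rw [hkey]
      exact condExp_mul_of_stronglyMeasurable_left (hadp n) (hkey ▸ hint_g (n+1)) hint_h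
    have h3 : μ[g (n+1) | ℱ n] =ᵐ[μ] g n * fun _ => μ[h] :=
      hmul.trans (Filter.EventuallyEq.mul (ae_eq_refl (g n)) hcond)
    refine h3.trans_le ?_
    filter_upwards with ω
    simp only [Pi.mul_apply]
    calc g n ω * μ[h] ≤ g n ω * 1 :=
      mul_le_mul_of_nonneg_left hEh (Real.exp_nonneg _)
    _ = g n ω := mul_one _
  set a : ℝ := Real.exp (↑m * (s * θ - φ s)) with ha_def
  have ha_pos : 0 < a := Real.exp_pos _
  have hgm : ∀ k, Measurable (g k) := fun k => ((hadp k).mono (ℱ.le k)).measurable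
  -- E[g 0] ≤ 1
  have hEg0 : μ[g 0] ≤ 1 := by
    have h2 : g 0 = fun ω => Real.exp (-φ s) * Real.exp (s * Y 0 ω) := by
      funext ω
      simp only [hg_def, zero_add, Finset.sum_range_one, Nat.cast_zero, ← Real.exp_add]
      ring_nf
    rw [h2, integral_const_mul, (hid_exp 0).integral_eq]
    calc Real.exp (-φ s) * ∫ ω, Real.exp (s * Y₀ ω) ∂μ
        ≤ Real.exp (-φ s) * Real.exp (φ s) :=
          mul_le_mul_of_nonneg_left (hφ s hs) (Real.exp_nonneg _)
      _ = 1 := by rw [← Real.exp_add]; simp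
  -- per-horizon maximal inequality
  have hmax : ∀ N : ℕ, μ {ω | ∃ k ≤ N, a ≤ g k ω}
      ≤ ENNReal.ofReal (Real.exp (φ s - θ * s) ^ m) := by
    intro N
    set E : Set Ω := {ω | ∃ k ≤ N, a ≤ g k ω} with hE_def
    have hEmeas : MeasurableSet E := by
      have : E = ⋃ k, ⋃ (_ : k ≤ N), {ω | a ≤ g k ω} := by
        ext ω; simp [hE_def, Set.mem_iUnion]
      rw [this]
      exact MeasurableSet.iUnion fun k => MeasurableSet.iUnion fun _ =>
        measurableSet_le measurable_const (hgm k)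
    set τ : Ω → WithTop ℕ := fun ω => (hittingBtwn g (Set.Ici a) 0 N ω : ℕ) with hτ_def
    have hτ : IsStoppingTime ℱ τ := hadp.adapted.isStoppingTime_hittingBtwn measurableSet_Ici
    have hτle : ∀ ω, τ ω ≤ N := fun ω => WithTop.coe_le_coe.mpr (hittingBtwn_le (u := g) (s := Set.Ici a) (n := 0) ω)
    have hsvneg : stoppedValue (-g) τ = -(stoppedValue g τ) := rfl
    have hsv_int : Integrable (stoppedValue g τ) μ := by
      have h4 := hsuper.neg.integrable_stoppedValue hτ hτle
      rw [hsvneg] at h4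
      simpa using h4.neg
    have step1 : ∫ ω, stoppedValue g τ ω ∂μ ≤ μ[g 0] := by
      have h5 := hsuper.neg.expected_stoppedValue_mono (isStoppingTime_const ℱ 0) hτ
        (fun ω => zero_le) hτle
      have h0 : stoppedValue (-g) (fun _ => WithTop.some (0 : ℕ)) = -(g 0) := rfl
      rw [h0, hsvneg] at h5
      simp only [Pi.neg_apply, integral_neg, neg_le_neg_iff] at h5
      exact h5
    have hge : ∀ ω ∈ E, a ≤ stoppedValue g τ ω := by
      intro ω hω
      obtain ⟨k, hk1, hk2⟩ := hω
      exact stoppedValue_hittingBtwn_mem ⟨k, ⟨Nat.zero_le _, hk1⟩, hk2⟩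
    have step2 : a * (μ E).toReal ≤ ∫ ω, stoppedValue g τ ω ∂μ := by
      refine le_trans (setIntegral_ge_of_const_le_real hEmeas (measure_ne_top μ E) hge
        hsv_int.integrableOn) ?_
      refine setIntegral_le_integral hsv_int ?_
      filter_upwards with ω using Real.exp_nonneg _
    have hfin : a * (μ E).toReal ≤ 1 := le_trans step2 (le_trans step1 hEg0)
    have hpow : Real.exp (φ s - θ * s) ^ m = a⁻¹ := by
      rw [← Real.exp_nat_mul, ha_def, ← Real.exp_neg]
      ring_nf
    have htoReal : (μ E).toReal ≤ Real.exp (φ s - θ * s) ^ m := by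
      rw [hpow, ← one_div, le_div_iff₀ ha_pos, mul_comm]
      exact hfin
    calc μ E = ENNReal.ofReal ((μ E).toReal) := (ENNReal.ofReal_toReal (measure_ne_top μ E)).symm
      _ ≤ ENNReal.ofReal (Real.exp (φ s - θ * s) ^ m) := ENNReal.ofReal_le_ofReal htoReal
  have hEvent : {ω | ∃ n : ℕ, 1 ≤ n ∧
      0 ≤ s * ((∑ i ∈ Finset.range n, Y i ω) - m * θ) - φ s * ((n : ℝ) - m)}
      = ⋃ N : ℕ, {ω | ∃ k ≤ N, a ≤ g k ω} := by
    ext ω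
    simp only [Set.mem_setOf_eq, Set.mem_iUnion]
    constructor
    · rintro ⟨n, hn1, hcond⟩
      rcases n with _ | k
      · omega
      refine ⟨k, k, le_rfl, ?_⟩
      have hx : s * ((∑ i ∈ Finset.range (k+1), Y i ω) - m * θ)
            - φ s * (((k+1 : ℕ) : ℝ) - m)
          = (s * (∑ i ∈ Finset.range (k+1), Y i ω) - ((k:ℝ)+1) * φ s)
            - (m : ℝ) * (s * θ - φ s) := by
        push_cast; ring
      rw [hx, sub_nonneg] at hcond
      exact Real.exp_le_exp.mpr hcond
    · rintro ⟨N, k, hkN, hak⟩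
      refine ⟨k+1, Nat.le_add_left 1 k, ?_⟩
      have hcond : (m : ℝ) * (s * θ - φ s)
          ≤ s * (∑ i ∈ Finset.range (k+1), Y i ω) - ((k:ℝ)+1) * φ s :=
        Real.exp_le_exp.mp hak
      have hx : s * ((∑ i ∈ Finset.range (k+1), Y i ω) - m * θ)
            - φ s * (((k+1 : ℕ) : ℝ) - m)
          = (s * (∑ i ∈ Finset.range (k+1), Y i ω) - ((k:ℝ)+1) * φ s)
            - (m : ℝ) * (s * θ - φ s) := by
        push_cast; ring
      rw [hx, sub_nonneg]
      exact hcond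
  rw [hEvent, Directed.measure_iUnion ?_]
  · exact iSup_le hmax
  · intro N M
    rcases le_total N M with hNM | hNM
    · exact ⟨M, fun ω ⟨k, hk, hak⟩ => ⟨k, hk.trans hNM, hak⟩, fun ω h => h⟩
    · exact ⟨N, fun ω h => h, fun ω ⟨k, hk, hak⟩ => ⟨k, hk.trans hNM, hak⟩⟩
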